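/- arXiv:2010.07211 — 2 statements merged into one kernel-verified Lean document; each statement's English description precedes it below -/
import Mathlib

section
/- The canonical weight sequence is a valid representation for rooted trees: if two rooted trees R_1 and R_2 satisfy cws(R_1) = cws(R_2), then R_1 and R_2 are isomorphic as rooted trees. -/
inductive OTree : Type
  | node : List OTree → OTree

namespace OTree

def size : OTree → ℕ
  | .node cs => (cs.attach.map (fun c => size c.1)).sum + 1
decreasing_by simp only [OTree.node.sizeOf_spec]; have := List.sizeOf_lt_of_mem c.2; omega

def ws : OTree → List ℕ
  | .node cs => size (.node cs) :: (cs.attach.map (fun c => ws c.1)).flatten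
decreasing_by simp only [OTree.node.sizeOf_spec]; have := List.sizeOf_lt_of_mem c.2; omega

def preorder : OTree → List OTree
  | .node cs => .node cs :: (cs.attach.map (fun c => preorder c.1)).flatten
decreasing_by simp only [OTree.node.sizeOf_spec]; have := List.sizeOf_lt_of_mem c.2; omega

lemma size_pos (R : OTree) : 0 < R.size := by
  cases R with | node cs => simp only [OTree.size]; omega

end OTree

inductive RIso : OTree → OTree → Prop
  | node {cs cs' : List OTree} (l : List OTree) (hp : l.Perm cs')
      (hlen : cs.length = l.length)
      (h : ∀ (i : ℕ) (h1 : i < cs.length) (h2 : i < l.length), RIso cs[i] l[i]) :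
      RIso (.node cs) (.node cs')

inductive Canonical : OTree → Prop
  | node {cs : List OTree}
      (hchain : List.Chain' (fun u v => OTree.ws v ≤ OTree.ws u) cs)
      (h : ∀ c ∈ cs, Canonical c) : Canonical (.node cs)

def Centroidal {V : Type} [Fintype V] (G : SimpleGraph V) (u : V) : Prop :=
  ∀ v : ↥{x : V | x ≠ u},
    2 * Nat.card {w : ↥{x : V | x ≠ u} | (G.induce {x : V | x ≠ u}).Reachable v w}
      ≤ Fintype.card V

def IsParent (w : List ℕ) (i j : ℕ) : Prop :=
  i < j ∧ j < i + w.getD i 0 ∧ ∀ k, i < k → k < j → ¬ (j < k + w.getD k 0)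

def graphOf (R : OTree) : SimpleGraph (Fin R.size) :=
  SimpleGraph.fromRel (fun i j => IsParent R.ws i.1 j.1)

def rootIdx (R : OTree) : Fin R.size := ⟨0, R.size_pos⟩

def B (n : ℕ) : Set (List ℕ) := {s | ∃ R : OTree, Canonical R ∧ R.size = n ∧ R.ws = s}

def Succeq (s t : List ℕ) : Prop := t ≤ s ∨ s <+: t

def A (q n : ℕ) : Set (List ℕ × List ℕ) :=
  {p | p.1 ∈ B q ∧ p.2 ∈ B (n - q) ∧ Succeq p.1 p.2.tail}

def FwsUni {V : Type} [Fintype V] (G : SimpleGraph V) (s : List ℕ) : Prop :=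
  ∃ R : OTree, Canonical R ∧ R.ws = s ∧
    ∃ f : graphOf R ≃g G, Centroidal G (f (rootIdx R))

def FwsBi {V : Type} [Fintype V] (G : SimpleGraph V) (s : List ℕ) : Prop :=
  ∃ u v, u ≠ v ∧ G.Adj u v ∧ Centroidal G u ∧ Centroidal G v ∧
  ∃ A B : OTree, Canonical A ∧ Canonical B ∧ B.ws ≤ A.ws ∧ s = A.ws ++ B.ws ∧
  ∃ (fA : graphOf A ≃g (G.deleteEdges {s(u,v)}).induce
        {x | (G.deleteEdges {s(u,v)}).Reachable u x})
    (fB : graphOf B ≃g (G.deleteEdges {s(u,v)}).induce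
        {x | (G.deleteEdges {s(u,v)}).Reachable v x}),
    (fA (rootIdx A)).1 = u ∧ (fB (rootIdx B)).1 = v


namespace OTree

lemma size_node (cs : List OTree) : size (.node cs) = (cs.map size).sum + 1 := by
  rw [size]; congr 1; simp [List.attach_map_val]

lemma ws_node (cs : List OTree) : ws (.node cs) = size (.node cs) :: (cs.map ws).flatten := by
  rw [ws]; congr 1; congr 1; simp [List.attach_map_val]

lemma size_lt_of_mem {c : OTree} {cs : List OTree} (h : c ∈ cs) :
    c.size < (OTree.node cs).size := by
  rw [size_node]
  have : c.size ≤ (cs.map size).sum := List.le_sum_of_mem (List.mem_map_of_mem (f := size) h)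
  omega

lemma ws_length : ∀ (T : OTree), T.ws.length = T.size := by
  intro T
  induction' hn : T.size using Nat.strong_induction_on with n IH generalizing T
  cases T with
  | node cs =>
    subst hn
    rw [ws_node, size_node]
    simp only [List.length_cons, List.length_flatten, List.map_map]
    have : cs.map (List.length ∘ ws) = cs.map size := by
      apply List.map_congr_left
      intro c hc
      exact IH c.size (size_lt_of_mem hc) c rfl
    rw [this]

lemma ws_ne_nil (T : OTree) : T.ws ≠ [] := by
  cases T with | node cs => rw [ws_node]; simp

lemma ws_head? (T : OTree) : T.ws.head? = some T.size := by
  cases T with | node cs => rw [ws_node]; rfl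

lemma flatten_ws_inj : ∀ (cs cs' : List OTree),
    (∀ c ∈ cs, ∀ T : OTree, c.ws = T.ws → c = T) →
    (cs.map ws).flatten = (cs'.map ws).flatten → cs = cs' := by
  intro cs
  induction cs with
  | nil =>
    intro cs' _ hf
    cases cs' with
    | nil => rfl
    | cons c' r' =>
      exfalso
      simp only [List.map_nil, List.flatten_nil, List.map_cons, List.flatten_cons] at hf
      exact ws_ne_nil c' (List.append_eq_nil_iff.mp hf.symm).1
  | cons c r ih =>
    intro cs' hIH hf
    cases cs' with
    | nil =>
      exfalso
      simp only [List.map_nil, List.flatten_nil, List.map_cons, List.flatten_cons] at hf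
      exact ws_ne_nil c (List.append_eq_nil_iff.mp hf).1
    | cons c' r' =>
      simp only [List.map_cons, List.flatten_cons] at hf
      have hsz : c.size = c'.size := by
        have h1 : (c.ws ++ (r.map ws).flatten).head? = some c.size := by
          rw [List.head?_append_of_ne_nil _ (ws_ne_nil c), ws_head?]
        have h2 : (c'.ws ++ (r'.map ws).flatten).head? = some c'.size := by
          rw [List.head?_append_of_ne_nil _ (ws_ne_nil c'), ws_head?]
        rw [hf, h2] at h1
        exact (Option.some.injEq .. ▸ h1).symm
      have hlen : c.ws.length = c'.ws.length := by rw [ws_length, ws_length, hsz]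
      obtain ⟨hh1, hh2⟩ := List.append_inj hf hlen
      have hc : c = c' := hIH c (List.mem_cons_self) c' hh1
      have hr : r = r' := ih r' (fun x hx => hIH x (List.mem_cons_of_mem _ hx)) hh2
      rw [hc, hr]

lemma ws_inj : ∀ (T1 T2 : OTree), T1.ws = T2.ws → T1 = T2 := by
  intro T1
  induction' hn : T1.size using Nat.strong_induction_on with n IH generalizing T1
  intro T2 hws
  cases T1 with | node cs =>
  cases T2 with | node cs' =>
  subst hn
  rw [ws_node, ws_node] at hws
  have hflat : (cs.map ws).flatten = (cs'.map ws).flatten := (List.cons.injEq .. ▸ hws).2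
  have : cs = cs' :=
    flatten_ws_inj cs cs' (fun c hc T hT => IH c.size (size_lt_of_mem hc) c rfl T hT) hflat
  rw [this]

end OTree

lemma forall2_rel' {r : OTree → OTree → Prop} :
    ∀ {l1 l2 : List OTree}, List.Forall₂ r l1 l2 → Multiset.Rel r ↑l1 ↑l2 := by
  intro l1 l2 h
  induction h with
  | nil => exact Multiset.Rel.zero
  | cons hab _ ih => exact Multiset.Rel.cons hab ih

lemma rel_coe_list' {r : OTree → OTree → Prop} :
    ∀ (cs : List OTree) (m : Multiset OTree), Multiset.Rel r ↑cs m →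
      ∀ cs' : List OTree, m = ↑cs' → ∃ l, List.Forall₂ r cs l ∧ l.Perm cs' := by
  intro cs
  induction cs with
  | nil =>
    intro m hm cs' hcs'
    subst hcs'
    rw [Multiset.coe_nil, Multiset.rel_zero_left] at hm
    exact ⟨[], List.Forall₂.nil, (Multiset.coe_eq_zero _ |>.mp hm ▸ List.Perm.refl _)⟩
  | cons c rest ih =>
    intro m hm cs' hcs'
    subst hcs'
    rw [show ((c :: rest : List OTree) : Multiset OTree) = c ::ₘ ↑rest from rfl,
      Multiset.rel_cons_left] at hm
    obtain ⟨b, bs', hcb, hrel, hm⟩ := hm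
    obtain ⟨l, hf, hp⟩ := ih bs' hrel bs'.toList (Multiset.coe_toList bs').symm
    refine ⟨b :: l, List.Forall₂.cons hcb hf, ?_⟩
    have : ((cs' : Multiset OTree)) = ↑(b :: bs'.toList) := by
      rw [hm, ← Multiset.cons_coe, Multiset.coe_toList]
    have hperm : cs'.Perm (b :: bs'.toList) := Multiset.coe_eq_coe.mp this
    exact ((hp.cons b).trans hperm.symm)

lemma riso_node_iff {cs cs' : List OTree} :
    RIso (.node cs) (.node cs') ↔ Multiset.Rel RIso ↑cs ↑cs' := by
  constructor
  · rintro ⟨l, hp, hlen, h⟩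
    have hf : List.Forall₂ RIso cs l := by
      rw [List.forall₂_iff_get]
      exact ⟨hlen, fun i h1 h2 => h i h1 h2⟩
    have := forall2_rel' hf
    rwa [Multiset.coe_eq_coe.mpr hp] at this
  · intro hrel
    obtain ⟨l, hf, hp⟩ := rel_coe_list' cs _ hrel cs' rfl
    refine RIso.node l hp (List.Forall₂.length_eq hf) ?_
    intro i h1 h2
    exact (List.forall₂_iff_get.mp hf).2 i h1 h2

lemma riso_symm : ∀ (T1 T2 : OTree), RIso T1 T2 → RIso T2 T1 := by
  intro T1
  induction' hn : T1.size using Nat.strong_induction_on with n IH generalizing T1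
  intro T2 h12
  cases T1 with | node cs =>
  cases T2 with | node cs' =>
  subst hn
  rw [riso_node_iff] at h12 ⊢
  rw [← Multiset.rel_flip] at h12
  refine h12.mono ?_
  intro a ha b hb hab
  have hb' : b ∈ cs := by exact_mod_cast hb
  exact IH b.size (OTree.size_lt_of_mem hb') b rfl a hab

lemma rel_trans_aux' :
    ∀ (t : Multiset OTree), (∀ x ∈ t, ∀ a c, RIso a x → RIso x c → RIso a c) →
      ∀ s u, Multiset.Rel RIso s t → Multiset.Rel RIso t u → Multiset.Rel RIso s u := by
  intro t
  induction t using Multiset.induction_on with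
  | empty =>
    intro _ s u h1 h2
    rw [Multiset.rel_zero_right.mp h1, Multiset.rel_zero_left.mp h2]
    exact Multiset.Rel.zero
  | cons x t ih =>
    intro hx s u h1 h2
    obtain ⟨a, as, ha1, ha2, rfl⟩ := Multiset.rel_cons_right.mp h1
    obtain ⟨b, bs, hb1, hb2, rfl⟩ := Multiset.rel_cons_left.mp h2
    exact Multiset.Rel.cons (hx x (Multiset.mem_cons_self _ _) a b ha1 hb1)
      (ih (fun y hy => hx y (Multiset.mem_cons_of_mem hy)) as bs ha2 hb2)

lemma riso_trans : ∀ (T2 T1 T3 : OTree), RIso T1 T2 → RIso T2 T3 → RIso T1 T3 := by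
  intro T2
  induction' hn : T2.size using Nat.strong_induction_on with n IH generalizing T2
  intro T1 T3 h12 h23
  cases T2 with | node cs2 =>
  cases T1 with | node cs1 =>
  cases T3 with | node cs3 =>
  subst hn
  rw [riso_node_iff] at h12 h23 ⊢
  refine rel_trans_aux' ↑cs2 ?_ _ _ h12 h23
  intro x hx a c hax hxc
  have hx' : x ∈ cs2 := by exact_mod_cast hx
  exact IH x.size (OTree.size_lt_of_mem hx') x rfl a c hax hxc

theorem stmt6 (R1 R2 C1 C2 : OTree) (h1 : Canonical C1) (h2 : Canonical C2)
    (hi1 : RIso R1 C1) (hi2 : RIso R2 C2) (h : C1.ws = C2.ws) : RIso R1 R2 := by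
  have hC : C1 = C2 := OTree.ws_inj C1 C2 h
  subst hC
  exact riso_trans C1 R1 R2 hi1 (riso_symm R2 C1 hi2)
end

section
/- Let B(n) denote the set of canonical weight sequences of rooted trees of order n, and for 1 ≤ q ≤ n-1 let A_q(n) be the set of pairs (a, b) ∈ B(q) × B(n-q) such that a ≽ b^#, where b^# is b with its first element removed and a ≽ t means a ≥ t lexicographically or a is a prefix of t. Then the map β(a, b) = n ⊕ a ⊕ b^# is a bijection from the union of the A_q(n) for 1 ≤ q ≤ n-1 onto B(n). -/
lemma OTree.ws_node_s13 (cs : List OTree) :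
    (OTree.node cs).ws = (OTree.node cs).size :: (cs.map OTree.ws).flatten := by
  rw [OTree.ws]; congr 1; simp

lemma OTree.size_node_s13 (cs : List OTree) :
    (OTree.node cs).size = (cs.map OTree.size).sum + 1 := by
  rw [OTree.size]; congr 2; simp

lemma OTree.size_cons (c : OTree) (cs : List OTree) :
    (OTree.node (c :: cs)).size = c.size + (OTree.node cs).size := by
  rw [OTree.size_node_s13, OTree.size_node_s13]; simp [List.map_cons]; omega

lemma OTree.ws_cons (c : OTree) (cs : List OTree) :
    (OTree.node (c :: cs)).ws
      = (OTree.node (c :: cs)).size :: (c.ws ++ ((OTree.node cs).ws).tail) := by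
  rw [OTree.ws_node_s13, OTree.ws_node_s13]; simp [List.map_cons, List.flatten_cons]

lemma OTree.ws_length_s13 (R : OTree) : R.ws.length = R.size := by
  have key : ∀ m : ℕ, ∀ R : OTree, sizeOf R = m → R.ws.length = R.size := by
    intro m
    induction m using Nat.strong_induction_on with
    | _ m ih =>
    intro R hs
    cases R with
    | node cs =>
    have hcs : ∀ c ∈ cs, (OTree.ws c).length = c.size := by
      intro c hc
      exact ih (sizeOf c)
        (by subst hs; simp only [OTree.node.sizeOf_spec]
            have := List.sizeOf_lt_of_mem hc; omega) c rfl
    rw [OTree.ws_node_s13, OTree.size_node_s13]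
    simp only [List.length_cons, List.length_flatten, List.map_map]
    rw [List.map_congr_left (l := cs) (f := List.length ∘ OTree.ws) (g := OTree.size)
      (by intro c hc; exact hcs c hc)]
  exact key _ R rfl

lemma B_struct {x : List ℕ} {k : ℕ} (h : x ∈ B k) :
    x.length = k ∧ x = k :: x.tail := by
  obtain ⟨R, _, rfl, rfl⟩ := h
  refine ⟨R.ws_length_s13, ?_⟩
  cases R with
  | node cs => rw [OTree.ws_node_s13]; rfl

lemma lex_append_left_of_not_prefix {l a : List ℕ} (r : List ℕ)
    (h : List.Lex (· < ·) l a) (hp : ¬ l <+: a) :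
    List.Lex (· < ·) (l ++ r) a := by
  induction h with
  | nil => exact absurd List.nil_prefix hp
  | rel h => exact List.Lex.rel h
  | cons h ih =>
    exact List.Lex.cons (ih (fun hpre => hp (List.cons_prefix_cons.mpr ⟨rfl, hpre⟩)))

lemma ws_eq_of_prefix {c d : OTree} (h : c.ws <+: d.ws) : c.ws = d.ws := by
  refine h.eq_of_length ?_
  rw [c.ws_length_s13, d.ws_length_s13]
  cases c with | node cs' =>
  cases d with | node ds' =>
  rw [OTree.ws_node_s13, OTree.ws_node_s13, List.cons_prefix_cons] at h
  exact h.1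

lemma ws_eq_of_prefix_append {c d : OTree} {r : List ℕ} (h : c.ws <+: d.ws ++ r) :
    c.ws = d.ws := by
  rcases le_total c.ws.length d.ws.length with hle | hle
  · exact ws_eq_of_prefix (List.prefix_of_prefix_length_le h (d.ws.prefix_append r) hle)
  · exact (ws_eq_of_prefix (List.prefix_of_prefix_length_le (d.ws.prefix_append r) h hle)).symm

lemma comp_mem_B {n q : ℕ} {a b : List ℕ} (_hq1 : 1 ≤ q) (hq2 : q ≤ n - 1) (hn : 2 ≤ n)
    (h : (a, b) ∈ A q n) : (n :: (a ++ b.tail)) ∈ B n := by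
  obtain ⟨⟨T, hTc, hTs, hTw⟩, ⟨S, hSc, hSs, hSw⟩, hsucc⟩ := h
  replace hTw : T.ws = a := hTw
  replace hSw : S.ws = b := hSw
  replace hsucc : Succeq a b.tail := hsucc
  cases S with | node cs =>
  have hsz : (OTree.node (T :: cs)).size = n := by
    rw [OTree.size_cons, hTs, hSs]; omega
  refine ⟨OTree.node (T :: cs), ?_, hsz, ?_⟩
  · cases hSc with
    | node hchain hall =>
      refine Canonical.node ?_ ?_
      · show List.IsChain _ (T :: cs); rw [List.isChain_cons]
        refine ⟨?_, hchain⟩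
        intro y hy
        cases cs with
        | nil => simp at hy
        | cons c cs' =>
          simp only [List.head?_cons, Option.mem_some_iff] at hy
          subst hy
          have hbt : b.tail = c.ws ++ ((OTree.node cs').ws).tail := by
            rw [← hSw, OTree.ws_cons, List.tail_cons]
          rcases hsucc with hle | hpre
          · by_contra hlt'
            rw [hTw] at hlt' 
            have hlt : a < c.ws := not_le.mp hlt'
            have : a < b.tail := by
              rw [hbt]; exact List.Lex.append_right _ _ hlt
            exact absurd hle (not_le.mpr this)
          · rw [hbt, ← hTw] at hpre
            exact le_of_eq (ws_eq_of_prefix_append hpre).symm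
      · intro d hd
        rcases List.mem_cons.mp hd with rfl | hd'
        · exact hTc
        · exact hall d hd'
  · rw [OTree.ws_cons, hsz, hTw, hSw]

lemma B_decomp {n : ℕ} {s : List ℕ} (hn : 2 ≤ n) (hs : s ∈ B n) :
    ∃ q, (1 ≤ q ∧ q ≤ n - 1) ∧ ∃ a b, (a, b) ∈ A q n ∧ s = n :: (a ++ b.tail) := by
  obtain ⟨R, hc, hsz, rfl⟩ := hs
  cases R with | node cs =>
  cases cs with
  | nil => rw [OTree.size_node_s13] at hsz; simp at hsz; omega
  | cons c cs' =>
    cases hc with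
    | node hchain hall =>
      rw [OTree.size_cons] at hsz
      have hpos := (OTree.node cs').size_pos
      have hcpos := c.size_pos
      refine ⟨c.size, ⟨hcpos, by omega⟩, c.ws, (OTree.node cs').ws,
        ⟨⟨c, hall c List.mem_cons_self, rfl, rfl⟩,
         ⟨OTree.node cs', Canonical.node hchain.tail
            (fun d hd => hall d (List.mem_cons_of_mem c hd)), by omega, rfl⟩, ?_⟩, ?_⟩
      · show Succeq c.ws ((OTree.node cs').ws).tail
        cases cs' with
        | nil =>
          left
          rw [OTree.ws_node_s13]
          exact not_lt.mp (fun h => List.not_lex_nil (r := (· < ·)) h)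
        | cons y cs'' =>
          have hbt : ((OTree.node (y :: cs'')).ws).tail
              = y.ws ++ ((OTree.node cs'').ws).tail := by
            rw [OTree.ws_cons, List.tail_cons]
          have hle : y.ws ≤ c.ws := (List.isChain_cons_cons.mp hchain).1
          rcases eq_or_lt_of_le hle with heq | hlt
          · right
            rw [hbt, ← heq]
            exact List.prefix_append y.ws _
          · left
            rw [hbt]
            refine le_of_lt ?_
            refine lex_append_left_of_not_prefix _ hlt ?_
            intro hpre
            exact absurd (ws_eq_of_prefix hpre) (ne_of_lt hlt)
      · rw [OTree.ws_cons, OTree.size_cons, hsz]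

theorem stmt13 (n : ℕ) (hn : 2 ≤ n) :
    Set.BijOn (fun p : List ℕ × List ℕ => n :: (p.1 ++ p.2.tail))
      (⋃ q ∈ Set.Icc 1 (n - 1), A q n) (B n) := by
  refine ⟨?_, ?_, ?_⟩
  · rintro ⟨a, b⟩ hp
    simp only [Set.mem_iUnion, Set.mem_Icc] at hp
    obtain ⟨q, ⟨hq1, hq2⟩, hA⟩ := hp
    exact comp_mem_B hq1 hq2 hn hA
  · rintro ⟨a, b⟩ hp ⟨a', b'⟩ hp' heq
    simp only [Set.mem_iUnion, Set.mem_Icc] at hp hp'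
    obtain ⟨q, _, ha, hb, _⟩ := hp
    obtain ⟨q', _, ha', hb', _⟩ := hp'
    replace ha : a ∈ B q := ha
    replace hb : b ∈ B (n - q) := hb
    replace ha' : a' ∈ B q' := ha'
    replace hb' : b' ∈ B (n - q') := hb'
    obtain ⟨hal, hah⟩ := B_struct ha
    obtain ⟨hal', hah'⟩ := B_struct ha'
    obtain ⟨hbl, hbh⟩ := B_struct hb
    obtain ⟨hbl', hbh'⟩ := B_struct hb'
    simp only [List.cons.injEq, true_and] at heq
    have hqq : q = q' := by
      rw [hah, hah', List.cons_append, List.cons_append] at heq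
      exact (List.cons.injEq _ _ _ _).mp heq |>.1
    have hinj := List.append_inj heq (by rw [hal, hal', hqq])
    have hbb : b = b' := by rw [hbh, hbh', hqq, hinj.2]
    rw [hinj.1, hbb]
  · intro s hs
    obtain ⟨q, ⟨hq1, hq2⟩, a, b, hA, hseq⟩ := B_decomp hn hs
    refine ⟨(a, b), ?_, hseq.symm⟩
    simp only [Set.mem_iUnion, Set.mem_Icc]
    exact ⟨q, ⟨hq1, hq2⟩, hA⟩
end
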